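/- Under the closed-loop error dynamics Q̇_E = Q_E V_E, Ṗ_E = ad*_{V_E} P_E − ad*_{Ad_{Q_d} u_d} P_E − R[V_E] − L*_{Q_E} dΥ(Q_E), with V_E = Ī_t⁻¹[P_E] and Ī_t = Ad*_{Q_d⁻¹} I Ad_{Q_d⁻¹}, the function L(Q_E, P_E, t) = ½⟨P_E, Ī_t⁻¹[P_E]⟩ + Υ(Q_E) satisfies L̇ = −R(V_E, V_E) along trajectories. -/

import Mathlib

/-!
STATEMENT 19: Under the closed-loop error dynamics
Q̇_E = Q_E V_E,
Ṗ_E = ad*_{V_E} P_E − ad*_{Ad_{Q_d} u_d} P_E − R[V_E] − L*_{Q_E} dΥ(Q_E),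
with V_E = Ī_t⁻¹[P_E] and Ī_t = Ad*_{Q_d⁻¹} ∘ I ∘ Ad_{Q_d⁻¹}, the function
L(Q_E, P_E, t) = ½⟨P_E, Ī_t⁻¹[P_E]⟩ + Υ(Q_E) satisfies
L̇ = −R(V_E, V_E) along trajectories.
Setting: G is the group of invertible n×n real matrices, g ≅ g* ≅ n×n
matrices via the trace pairing ⟨P,U⟩ = tr(Pᵀ U); ad*_V P = Vᵀ P − P Vᵀ,
Ad_Q V = Q V Q⁻¹, Ad*_Q P = Qᵀ P (Q⁻¹)ᵀ.  Q_d(t) is a smooth curve in G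
with Q̇_d = Q_d u_d.  I : g → g* is a constant positive-definite
self-adjoint inertia; Ī_t X = Ad*_{Q_d⁻¹}(I(Ad_{Q_d⁻¹} X)).  The
constraint V_E = Ī_t⁻¹[P_E] is expressed as Ī_t[V_E] = P_E, under which
½⟨P_E, Ī_t⁻¹[P_E]⟩ = ½⟨P_E, V_E⟩.  Υ is smooth with
⟨L*_Q dΥ(Q), U⟩ = ⟨dΥ(Q), QU⟩, and R is a positive-definite symmetric
bilinear form on g with R[V] ∈ g* and R(V,W) = ⟨R[V], W⟩.
-/

open Matrix

noncomputable section

attribute [local instance]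
  Matrix.linftyOpNormedAddCommGroup Matrix.linftyOpNormedSpace
  Matrix.linftyOpNormedRing Matrix.linftyOpNormedAlgebra

variable {n : ℕ}

/-- trace pairing between g* and g. -/
def pairg (P U : Matrix (Fin n) (Fin n) ℝ) : ℝ := (Pᵀ * U).trace

/-- `ad*_V P = Vᵀ P − P Vᵀ`. -/
def coad (V P : Matrix (Fin n) (Fin n) ℝ) : Matrix (Fin n) (Fin n) ℝ :=
  Vᵀ * P - P * Vᵀ

lemma lin_deriv (L : Matrix (Fin n) (Fin n) ℝ →ₗ[ℝ] Matrix (Fin n) (Fin n) ℝ)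
    {f : ℝ → Matrix (Fin n) (Fin n) ℝ} {f' : Matrix (Fin n) (Fin n) ℝ} {t : ℝ}
    (h : HasDerivAt f f' t) : HasDerivAt (fun s => L (f s)) (L f') t := by
  have := L.toContinuousLinearMap.hasFDerivAt (x := f t) |>.comp_hasDerivAt t h
  simp at this; exact this

lemma transpose_deriv {f : ℝ → Matrix (Fin n) (Fin n) ℝ} {f' : Matrix (Fin n) (Fin n) ℝ} {t : ℝ}
    (h : HasDerivAt f f' t) : HasDerivAt (fun s => (f s)ᵀ) f'ᵀ t := by
  have := lin_deriv ((Matrix.transposeLinearEquiv (Fin n) (Fin n) ℝ ℝ).toLinearMap) h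
  simpa using this

lemma trace_deriv {f : ℝ → Matrix (Fin n) (Fin n) ℝ} {f' : Matrix (Fin n) (Fin n) ℝ} {t : ℝ}
    (h : HasDerivAt f f' t) : HasDerivAt (fun s => (f s).trace) f'.trace t := by
  have := ((Matrix.traceLinearMap (Fin n) ℝ ℝ).toContinuousLinearMap.hasFDerivAt
    (x := f t)).comp_hasDerivAt t h
  simp at this; exact this

lemma inv_deriv {Qd ud : ℝ → Matrix (Fin n) (Fin n) ℝ} {t : ℝ}
    (hu : IsUnit (Qd t)) (h : HasDerivAt Qd (Qd t * ud t) t) :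
    HasDerivAt (fun s => (Qd s)⁻¹) (-(ud t * (Qd t)⁻¹)) t := by
  obtain ⟨u, hu⟩ := hu
  have h0 : HasFDerivAt Ring.inverse
      (-((ContinuousLinearMap.mulLeftRight ℝ (Matrix (Fin n) (Fin n) ℝ)) ↑u⁻¹) ↑u⁻¹) (Qd t) :=
    hu ▸ hasFDerivAt_ringInverse u
  have h1 := h0.comp_hasDerivAt t h
  have h2 : HasDerivAt (fun s => Ring.inverse (Qd s))
      (-(((u⁻¹ : (Matrix (Fin n) (Fin n) ℝ)ˣ) : Matrix (Fin n) (Fin n) ℝ) * (Qd t * ud t) *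
        ((u⁻¹ : (Matrix (Fin n) (Fin n) ℝ)ˣ) : Matrix (Fin n) (Fin n) ℝ))) t := by
    simp at h1 ⊢; exact h1
  have h3 : (fun s => Ring.inverse (Qd s)) = fun s => (Qd s)⁻¹ := by
    funext s; rw [Matrix.nonsing_inv_eq_ringInverse]
  have hc : (↑u⁻¹ : Matrix (Fin n) (Fin n) ℝ) = (Qd t)⁻¹ := by
    rw [Matrix.coe_units_inv, hu]
  rw [h3, hc] at h2
  have hinv : (Qd t)⁻¹ * Qd t = 1 :=
    Matrix.nonsing_inv_mul _ ((Matrix.isUnit_iff_isUnit_det _).mp ⟨u, hu⟩)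
  convert h2 using 1
  rw [← Matrix.mul_assoc, hinv, Matrix.one_mul]

lemma pairg_sub_left (X Y Z : Matrix (Fin n) (Fin n) ℝ) :
    pairg (X - Y) Z = pairg X Z - pairg Y Z := by
  simp [pairg, Matrix.transpose_sub, Matrix.sub_mul]

lemma pairg_add_left (X Y Z : Matrix (Fin n) (Fin n) ℝ) :
    pairg (X + Y) Z = pairg X Z + pairg Y Z := by
  simp [pairg, Matrix.transpose_add, Matrix.add_mul]

lemma pairg_neg_left (X Z : Matrix (Fin n) (Fin n) ℝ) :
    pairg (-X) Z = -pairg X Z := by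
  simp [pairg, Matrix.neg_mul]

lemma pairg_add_right (X Y Z : Matrix (Fin n) (Fin n) ℝ) :
    pairg X (Y + Z) = pairg X Y + pairg X Z := by
  simp [pairg, Matrix.mul_add]

lemma pairg_sub_right (X Y Z : Matrix (Fin n) (Fin n) ℝ) :
    pairg X (Y - Z) = pairg X Y - pairg X Z := by
  simp [pairg, Matrix.mul_sub]

lemma pairg_conj (A X Q Y : Matrix (Fin n) (Fin n) ℝ) :
    pairg (Aᵀ * X * Qᵀ) Y = pairg X (A * Y * Q) := by
  simp only [pairg, Matrix.transpose_mul, Matrix.transpose_transpose]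
  rw [Matrix.trace_mul_comm, Matrix.trace_mul_comm Y, Matrix.mul_assoc, Matrix.trace_mul_comm Q]
  simp only [Matrix.mul_assoc]

lemma pairg_tl (B X Y : Matrix (Fin n) (Fin n) ℝ) :
    pairg (Bᵀ * X) Y = pairg X (B * Y) := by
  simp only [pairg, Matrix.transpose_mul, Matrix.transpose_transpose, Matrix.mul_assoc]

lemma pairg_tr (B X Y : Matrix (Fin n) (Fin n) ℝ) :
    pairg (X * Bᵀ) Y = pairg X (Y * B) := by
  simp only [pairg, Matrix.transpose_mul, Matrix.transpose_transpose, Matrix.mul_assoc]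
  rw [Matrix.trace_mul_comm]
  simp only [Matrix.mul_assoc]

lemma pairg_coad_self (V P : Matrix (Fin n) (Fin n) ℝ) : pairg (coad V P) V = 0 := by
  rw [coad, pairg_sub_left, pairg_tl, pairg_tr, sub_self]

lemma pairg_neg_right (X Y : Matrix (Fin n) (Fin n) ℝ) : pairg X (-Y) = -pairg X Y := by
  simp [pairg, Matrix.mul_neg]

theorem statement19 (n : ℕ)
    -- the desired configuration curve, Q̇_d = Q_d u_d
    (Qd ud : ℝ → Matrix (Fin n) (Fin n) ℝ)
    (hQdunit : ∀ t, IsUnit (Qd t))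
    (hQddyn : ∀ t, HasDerivAt Qd (Qd t * ud t) t)
    -- constant positive-definite self-adjoint inertia I : g → g*
    (I : Matrix (Fin n) (Fin n) ℝ →ₗ[ℝ] Matrix (Fin n) (Fin n) ℝ)
    (hIsym : ∀ X Y, pairg (I X) Y = pairg (I Y) X)
    (hIpos : ∀ X, X ≠ 0 → 0 < pairg (I X) X)
    -- error trajectory
    (QE PE VE : ℝ → Matrix (Fin n) (Fin n) ℝ)
    (hQEunit : ∀ t, IsUnit (QE t))
    -- velocity constraint V_E = Ī_t⁻¹[P_E], i.e. Ī_t[V_E] = P_E, where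
    -- Ī_t X = Ad*_{Q_d⁻¹}(I(Ad_{Q_d⁻¹} X))
    (hVE : ∀ t, ((Qd t)⁻¹)ᵀ * (I ((Qd t)⁻¹ * VE t * Qd t)) * (Qd t)ᵀ = PE t)
    (hVEdiff : Differentiable ℝ VE)
    -- potential Υ and its left-trivialised differential DU along Q_E
    (Υ : Matrix (Fin n) (Fin n) ℝ → ℝ) (hΥ : Differentiable ℝ Υ)
    (DU : ℝ → Matrix (Fin n) (Fin n) ℝ)
    (hDU : ∀ t X, pairg (DU t) X = fderiv ℝ Υ (QE t) (QE t * X))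
    -- Rayleigh dissipation: positive-definite symmetric bilinear form
    (Rb : Matrix (Fin n) (Fin n) ℝ →ₗ[ℝ] Matrix (Fin n) (Fin n) ℝ)
    (hRsym : ∀ X Y, pairg (Rb X) Y = pairg (Rb Y) X)
    (hRpos : ∀ X, X ≠ 0 → 0 < pairg (Rb X) X)
    -- closed-loop error dynamics
    (hQEdyn : ∀ t, HasDerivAt QE (QE t * VE t) t)
    (hPEdyn : ∀ t, HasDerivAt PE
      (coad (VE t) (PE t) - coad (Qd t * ud t * (Qd t)⁻¹) (PE t)
        - Rb (VE t) - DU t) t) :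
    ∀ t, HasDerivAt (fun s => (1 / 2 : ℝ) * pairg (PE s) (VE s) + Υ (QE s))
      (-(pairg (Rb (VE t)) (VE t))) t := by
  intro t
  have hVE' : HasDerivAt VE (deriv VE t) t := (hVEdiff t).hasDerivAt
  -- notation
  set Q : Matrix (Fin n) (Fin n) ℝ := Qd t with hQ
  set u : Matrix (Fin n) (Fin n) ℝ := ud t with hu
  set A : Matrix (Fin n) (Fin n) ℝ := (Qd t)⁻¹ with hA
  set V : Matrix (Fin n) (Fin n) ℝ := VE t with hV
  set W : Matrix (Fin n) (Fin n) ℝ := deriv VE t with hW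
  set M : Matrix (Fin n) (Fin n) ℝ := A * V * Q with hM
  set M' : Matrix (Fin n) (Fin n) ℝ := (-(u * A) * V + A * W) * Q + A * V * (Q * u) with hM'
  have hQA : Q * A = 1 :=
    Matrix.mul_nonsing_inv _ ((Matrix.isUnit_iff_isUnit_det _).mp (hQdunit t))
  have hAQ : A * Q = 1 :=
    Matrix.nonsing_inv_mul _ ((Matrix.isUnit_iff_isUnit_det _).mp (hQdunit t))
  have hQAT : Qᵀ * Aᵀ = 1 := by rw [← Matrix.transpose_mul, hAQ, Matrix.transpose_one]
  -- derivative of A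
  have hAder : HasDerivAt (fun s => (Qd s)⁻¹) (-(u * A)) t := inv_deriv (hQdunit t) (hQddyn t)
  -- derivative of M
  have hMder : HasDerivAt (fun s => (Qd s)⁻¹ * VE s * Qd s) M' t :=
    (hAder.mul hVE').mul (hQddyn t)
  -- geometric derivative of PE
  have hPgeom : HasDerivAt PE
      (((-(u * A))ᵀ * I M + Aᵀ * I M') * Qᵀ + Aᵀ * I M * (Q * u)ᵀ) t := by
    have h1 := ((transpose_deriv hAder).mul (lin_deriv I hMder)).mul
      (transpose_deriv (hQddyn t))
    exact h1.congr_of_eventuallyEq (Filter.Eventually.of_forall fun s => (hVE s).symm)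
  have hkey : coad V (PE t) - coad (Q * u * A) (PE t) - Rb V - DU t
      = ((-(u * A))ᵀ * I M + Aᵀ * I M') * Qᵀ + Aᵀ * I M * (Q * u)ᵀ :=
    HasDerivAt.unique (hPEdyn t) hPgeom
  -- derivative of the pairing term
  have hpair : HasDerivAt (fun s => pairg (PE s) (VE s))
      (pairg (coad V (PE t) - coad (Q * u * A) (PE t) - Rb V - DU t) V + pairg (PE t) W) t := by
    have h2 := trace_deriv ((transpose_deriv (hPEdyn t)).mul hVE')
    simp only [pairg, Matrix.transpose_add, Matrix.add_mul, Matrix.trace_add] at h2 ⊢; exact h2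
  -- derivative of the potential term
  have hups : HasDerivAt (fun s => Υ (QE s)) (pairg (DU t) V) t := by
    rw [hDU t V]
    exact ((hΥ (QE t)).hasFDerivAt).comp_hasDerivAt t (hQEdyn t)
  have hsum := ((hpair.const_mul ((1:ℝ)/2)).add hups)
  convert hsum using 1
  case e'_4 => rfl
  case e'_5 => rfl
  case e'_8 => rfl
  -- now the scalar algebra
  have hP : PE t = Aᵀ * I M * Qᵀ := (hVE t).symm
  have e_coad2 : pairg (coad (Q * u * A) (PE t)) V
      = pairg (I M) (u * M) - pairg (I M) (M * u) := by
    rw [hP]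
    have h1 : (Q * u * A)ᵀ * (Aᵀ * I M * Qᵀ) = Aᵀ * (uᵀ * I M) * Qᵀ := by
      simp only [Matrix.transpose_mul, Matrix.mul_assoc]
      rw [← Matrix.mul_assoc Qᵀ Aᵀ, hQAT, Matrix.one_mul]
    have h2 : (Aᵀ * I M * Qᵀ) * (Q * u * A)ᵀ = Aᵀ * (I M * uᵀ) * Qᵀ := by
      simp only [Matrix.transpose_mul, Matrix.mul_assoc]
      rw [← Matrix.mul_assoc Qᵀ Aᵀ, hQAT, Matrix.one_mul]
    rw [coad, h1, h2, pairg_sub_left, pairg_conj, pairg_conj, pairg_tl, pairg_tr, ← hM]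
  have e_rhs : pairg (((-(u * A))ᵀ * I M + Aᵀ * I M') * Qᵀ + Aᵀ * I M * (Q * u)ᵀ) V
      = pairg (I M) M' - pairg (I M) (u * M) + pairg (I M) (M * u) := by
    have h3 : ((-(u * A))ᵀ * I M + Aᵀ * I M') * Qᵀ = Aᵀ * (I M' - uᵀ * I M) * Qᵀ := by
      rw [Matrix.transpose_neg, Matrix.transpose_mul]; noncomm_ring
    have h4 : Aᵀ * I M * (Q * u)ᵀ = Aᵀ * (I M * uᵀ) * Qᵀ := by
      rw [Matrix.transpose_mul]; noncomm_ring
    rw [h3, h4, pairg_add_left, pairg_conj, pairg_conj, ← hM, pairg_sub_left, pairg_tl,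
      pairg_tr, hIsym M' M]
  have e_M' : pairg (I M) M'
      = -pairg (I M) (u * M) + pairg (I M) (A * W * Q) + pairg (I M) (M * u) := by
    have h5 : M' = -(u * M) + A * W * Q + M * u := by rw [hM', hM]; noncomm_ring
    rw [h5, pairg_add_right, pairg_add_right, pairg_neg_right]
  have e_PW : pairg (PE t) W = pairg (I M) (A * W * Q) := by rw [hP, pairg_conj]
  have e_all := congrArg (fun Z => pairg Z V) hkey
  rw [pairg_sub_left, pairg_sub_left, pairg_sub_left, pairg_coad_self, e_coad2, e_rhs,
    e_M'] at e_all
  rw [pairg_sub_left, pairg_sub_left, pairg_sub_left, pairg_coad_self, e_coad2, e_PW]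
  linarith
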